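/- Let G be a finite group and C ≠ S a closed twin class of P(G) of compound type. Then C is critical (i.e., Ĉ = C ∪̇ {1} and |Ĉ| = p^r for some prime p and r ≥ 2) if and only if the parameters of C are (p, r, 0). -/

import Mathlib

/-- Closed neighbourhood of a vertex. -/
def closedNbhd {V : Type*} (Γ : SimpleGraph V) (x : V) : Set V := {y | Γ.Adj x y} ∪ {x}

/-- Closed neighbourhood of a set of vertices (intersection convention; N[∅] = univ). -/
def closedNbhdSet {V : Type*} (Γ : SimpleGraph V) (X : Set V) : Set V :=
  ⋂ x ∈ X, closedNbhd Γ x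

/-- Neighbourhood closure X̂ = N[N[X]]. -/
def nbhdClosure {V : Type*} (Γ : SimpleGraph V) (X : Set V) : Set V :=
  closedNbhdSet Γ (closedNbhdSet Γ X)

/-- Closed twin class of a vertex. -/
def twinClass {V : Type*} (Γ : SimpleGraph V) (y : V) : Set V :=
  {x | closedNbhd Γ x = closedNbhd Γ y}

/-- The power graph of a group. -/
def powerGraph (G : Type*) [Group G] : SimpleGraph G where
  Adj x y := x ≠ y ∧ ((∃ m : ℕ, 0 < m ∧ y = x ^ m) ∨ (∃ m : ℕ, 0 < m ∧ x = y ^ m))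
  symm := ⟨by rintro x y ⟨h, h2⟩; exact ⟨h.symm, h2.symm⟩⟩
  loopless := ⟨by rintro x ⟨h, _⟩; exact h rfl⟩

/-- The ⋄-class of an element: elements generating the same cyclic subgroup. -/
def diamondClass {G : Type*} [Group G] (y : G) : Set G :=
  {x | Subgroup.zpowers x = Subgroup.zpowers y}

/-- A critical class: Ĉ = C ∪̇ {1} and |Ĉ| = p^r for a prime p and r ≥ 2. -/
def IsCritical {G : Type*} [Group G] (P : SimpleGraph G) (C : Set G) : Prop :=
  nbhdClosure P C = C ∪ {1} ∧ (1 : G) ∉ C ∧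
    ∃ p r : ℕ, p.Prime ∧ 2 ≤ r ∧ (nbhdClosure P C).ncard = p ^ r

open Subgroup

section Aux
variable {G : Type*} [Group G] [Fintype G]

lemma exists_pos_pow_of_mem_zpowers' {u w : G} (h : u ∈ zpowers w) :
    ∃ m : ℕ, 0 < m ∧ u = w ^ m := by
  rw [← mem_powers_iff_mem_zpowers, Submonoid.mem_powers_iff] at h
  obtain ⟨m, hm⟩ := h
  exact ⟨m + orderOf w, Nat.add_pos_right m (orderOf_pos w),
    by rw [pow_add, pow_orderOf_eq_one, mul_one, hm]⟩

lemma mem_closedNbhd_iff' {u w : G} :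
    u ∈ closedNbhd (powerGraph G) w ↔ u ∈ zpowers w ∨ w ∈ zpowers u := by
  constructor
  · rintro (⟨hne, ⟨m, _, rfl⟩ | ⟨m, _, he⟩⟩ | h)
    · exact Or.inl (mem_zpowers_iff.mpr ⟨m, by rw [zpow_natCast]⟩)
    · exact Or.inr (mem_zpowers_iff.mpr ⟨m, by rw [zpow_natCast, he]⟩)
    · rw [Set.mem_singleton_iff] at h
      exact Or.inl (h ▸ mem_zpowers u)
  · intro h
    by_cases he : u = w
    · exact Or.inr (by simp [closedNbhd, he])
    · left
      rcases h with h | h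
      · obtain ⟨m, hm, he2⟩ := exists_pos_pow_of_mem_zpowers' h
        exact ⟨fun hh => he hh.symm, Or.inl ⟨m, hm, he2⟩⟩
      · obtain ⟨m, hm, he2⟩ := exists_pos_pow_of_mem_zpowers' h
        exact ⟨fun hh => he hh.symm, Or.inr ⟨m, hm, he2⟩⟩

lemma mem_zpowers_of_orderOf_dvd' {g u w : G} (hu : u ∈ zpowers g) (hw : w ∈ zpowers g)
    (h : orderOf u ∣ orderOf w) : u ∈ zpowers w := by
  rw [← mem_powers_iff_mem_zpowers, Submonoid.mem_powers_iff] at hu hw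
  obtain ⟨k, rfl⟩ := hu
  obtain ⟨l, rfl⟩ := hw
  set n := orderOf g with hn
  have hnpos : 0 < n := orderOf_pos g
  set a := Nat.gcd n k with ha
  set b := Nat.gcd n l with hb
  rw [orderOf_pow, orderOf_pow, ← hn, ← ha, ← hb] at h
  -- h : n / a ∣ n / b, want b ∣ a
  have hba : b ∣ a := by
    obtain ⟨t, ht⟩ := h
    have h1 : a * (n / a) = n := Nat.mul_div_cancel' (Nat.gcd_dvd_left n k)
    have h2 : b * (n / b) = n := Nat.mul_div_cancel' (Nat.gcd_dvd_left n l)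
    have hapos : 0 < a := Nat.gcd_pos_of_pos_left k hnpos
    have hpos : 0 < n / a := Nat.div_pos (Nat.le_of_dvd hnpos (Nat.gcd_dvd_left n k)) hapos
    have : a * (n / a) = (b * t) * (n / a) := by
      rw [h1, mul_assoc, mul_comm t, ← ht, h2]
    exact ⟨t, (Nat.eq_of_mul_eq_mul_right hpos this)⟩
  -- g ^ b ∈ zpowers (g ^ l)
  have hgb : g ^ b ∈ zpowers (g ^ l) := by
    have hbz : (b : ℤ) = n * Nat.gcdA n l + l * Nat.gcdB n l := Nat.gcd_eq_gcd_ab n l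
    have h1 : g ^ ((n : ℤ) * Nat.gcdA n l) = 1 := by
      rw [zpow_mul, zpow_natCast, hn, pow_orderOf_eq_one, one_zpow]
    refine mem_zpowers_iff.mpr ⟨Nat.gcdB n l, ?_⟩
    rw [← zpow_natCast g l, ← zpow_mul, ← zpow_natCast g b, hbz, zpow_add, h1, one_mul, zpow_mul]
  have hab : b ∣ k := hba.trans (Nat.gcd_dvd_right n k)
  have : g ^ k = (g ^ b) ^ (k / b) := by
    rw [← pow_mul, Nat.mul_div_cancel' hab]
  exact this ▸ pow_mem hgb _

end Aux


theorem stmt14 {G : Type*} [Group G] [Fintype G] (C : Set G) (y : G) (p r s : ℕ)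
    (hp : p.Prime) (hr : 2 ≤ r) (hs : s ≤ r - 2)
    (hC : C = twinClass (powerGraph G) y)
    (hS : C ≠ twinClass (powerGraph G) 1)
    (hcomp : ∃ a ∈ C, ∃ b ∈ C, Subgroup.zpowers a ≠ Subgroup.zpowers b)
    (hy : orderOf y = p ^ r)
    (hdesc : C = {z | z ∈ Subgroup.zpowers y ∧ p ^ (s + 1) ≤ orderOf z ∧ orderOf z ≤ p ^ r}) :
    IsCritical (powerGraph G) C ↔ s = 0 := by
  classical
  have hp2 : 2 ≤ p := hp.two_le
  have hyC : y ∈ C := by rw [hC]; exact rfl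
  have hCy : ∀ x ∈ C, closedNbhd (powerGraph G) x = closedNbhd (powerGraph G) y := by
    intro x hx; rw [hC] at hx; exact hx
  have hNC : closedNbhdSet (powerGraph G) C = closedNbhd (powerGraph G) y := by
    apply Set.Subset.antisymm
    · intro w hw
      exact Set.mem_iInter₂.mp hw y hyC
    · intro w hw
      apply Set.mem_iInter₂.mpr
      intro x hx
      rw [hCy x hx]; exact hw
  have hmemhat : ∀ z : G, z ∈ nbhdClosure (powerGraph G) C ↔
      ∀ w ∈ closedNbhd (powerGraph G) y, z ∈ closedNbhd (powerGraph G) w := by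
    intro z
    rw [nbhdClosure, hNC]
    exact Set.mem_iInter₂
  have pcomp : ∀ (N a b : ℕ), a ∣ p ^ N → b ∣ p ^ N → a ∣ b ∨ b ∣ a := by
    intro N a b ha hb
    obtain ⟨i, hi, rfl⟩ := (Nat.dvd_prime_pow hp).mp ha
    obtain ⟨j, hj, rfl⟩ := (Nat.dvd_prime_pow hp).mp hb
    rcases le_total i j with h | h
    · exact Or.inl (pow_dvd_pow p h)
    · exact Or.inr (pow_dvd_pow p h)
  -- the subgroup ⟨y⟩ is contained in the closure
  have hsub : (Subgroup.zpowers y : Set G) ⊆ nbhdClosure (powerGraph G) C := by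
    intro u hu
    rw [hmemhat]
    intro w hw
    rw [mem_closedNbhd_iff'] at hw ⊢
    rcases hw with hw | hw
    · have h1 : orderOf u ∣ p ^ r := hy ▸ orderOf_dvd_of_mem_zpowers hu
      have h2 : orderOf w ∣ p ^ r := hy ▸ orderOf_dvd_of_mem_zpowers hw
      rcases pcomp r _ _ h1 h2 with h | h
      · exact Or.inl (mem_zpowers_of_orderOf_dvd' hu hw h)
      · exact Or.inr (mem_zpowers_of_orderOf_dvd' hw hu h)
    · exact Or.inl (Subgroup.zpowers_le.mpr hw hu)
  have h1C : (1 : G) ∉ C := by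
    rw [hdesc]
    rintro ⟨-, h1, -⟩
    rw [orderOf_one] at h1
    have : 1 < p ^ (s + 1) := Nat.one_lt_pow (by omega) hp.one_lt
    omega
  -- the element of order p
  have hdvd1 : p ^ (r - 1) ∣ p ^ r := pow_dvd_pow p (by omega)
  have hox0 : orderOf (y ^ p ^ (r - 1)) = p := by
    rw [orderOf_pow_of_dvd (pow_ne_zero _ hp.pos.ne') (hy ▸ hdvd1), hy,
      Nat.pow_div (by omega) hp.pos]
    have h1 : r - (r - 1) = 1 := by omega
    rw [h1, pow_one]
  have hx0y : y ^ p ^ (r - 1) ∈ Subgroup.zpowers y :=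
    (Subgroup.zpowers y).pow_mem (Subgroup.mem_zpowers y) _
  constructor
  · -- critical → s = 0
    rintro ⟨hclos, -, -⟩
    by_contra hs0
    have hx0hat := hsub hx0y
    rw [hclos] at hx0hat
    rcases hx0hat with hx0C | hx01
    · rw [hdesc] at hx0C
      obtain ⟨-, hle, -⟩ := hx0C
      rw [hox0] at hle
      have h2s : p ^ 2 ≤ p ^ (s + 1) := Nat.pow_le_pow_right hp.pos (by omega)
      have : p < p ^ 2 := by nlinarith
      omega
    · rw [Set.mem_singleton_iff] at hx01
      have := hox0
      rw [hx01, orderOf_one] at this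
      omega
  · -- s = 0 → critical
    intro hs0
    subst hs0
    have hx0C : y ^ p ^ (r - 1) ∈ C := by
      rw [hdesc]
      exact ⟨hx0y, by rw [hox0, pow_one], by rw [hox0]; exact Nat.le_self_pow (by omega) p⟩
    have hCU : C ∪ {1} = (Subgroup.zpowers y : Set G) := by
      ext z
      simp only [Set.mem_union, Set.mem_singleton_iff, hdesc, Set.mem_setOf_eq]
      constructor
      · rintro (⟨hz, -, -⟩ | rfl)
        · exact hz
        · exact Subgroup.one_mem _
      · intro hz
        by_cases h1 : z = 1
        · exact Or.inr h1
        · left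
          have hdz : orderOf z ∣ p ^ r := hy ▸ orderOf_dvd_of_mem_zpowers hz
          obtain ⟨i, hi, hoi⟩ := (Nat.dvd_prime_pow hp).mp hdz
          have hine : i ≠ 0 := by
            intro h0
            rw [h0, pow_zero] at hoi
            exact h1 (orderOf_eq_one_iff.mp hoi)
          refine ⟨hz, ?_, Nat.le_of_dvd (by positivity) hdz⟩
          rw [hoi, pow_one]
          calc p = p ^ 1 := (pow_one p).symm
            _ ≤ p ^ i := Nat.pow_le_pow_right hp.pos (by omega)
    have hrev : nbhdClosure (powerGraph G) C ⊆ (Subgroup.zpowers y : Set G) := by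
      intro z hz
      by_contra hzny
      have hzNy : z ∈ closedNbhd (powerGraph G) y :=
        (hmemhat z).mp hz y (mem_closedNbhd_iff'.mpr (Or.inl (Subgroup.mem_zpowers y)))
      have hyz : y ∈ Subgroup.zpowers z := by
        rcases mem_closedNbhd_iff'.mp hzNy with h | h
        · exact absurd h hzny
        · exact h
      have hdvd2 : p ^ r ∣ orderOf z := hy ▸ orderOf_dvd_of_mem_zpowers hyz
      have hn0 : orderOf z ≠ 0 := (orderOf_pos z).ne'
      by_cases hq : ∃ q : ℕ, q.Prime ∧ q ∣ orderOf z ∧ q ≠ p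
      · obtain ⟨q, hqp, hqd, hqne⟩ := hq
        have hpn : p ∣ orderOf z := dvd_trans (dvd_pow_self p (by omega)) hdvd2
        have hpq : p * q ∣ orderOf z :=
          (Nat.Coprime.mul_dvd_of_dvd_of_dvd ((Nat.coprime_primes hp hqp).mpr
            (Ne.symm hqne)) hpn hqd)
        set w := z ^ (orderOf z / (p * q)) with hwdef
        have hw_ord : orderOf w = p * q := orderOf_pow_orderOf_div hn0 hpq
        have hwz : w ∈ Subgroup.zpowers z :=
          (Subgroup.zpowers z).pow_mem (Subgroup.mem_zpowers z) _
        have hx0z : y ^ p ^ (r - 1) ∈ Subgroup.zpowers z := Subgroup.zpowers_le.mpr hyz hx0y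
        have hx0w : y ^ p ^ (r - 1) ∈ Subgroup.zpowers w :=
          mem_zpowers_of_orderOf_dvd' hx0z hwz
            (by rw [hox0, hw_ord]; exact dvd_mul_right p q)
        have hwNy : w ∈ closedNbhd (powerGraph G) y := by
          rw [← hCy _ hx0C]
          exact mem_closedNbhd_iff'.mpr (Or.inr hx0w)
        rcases mem_closedNbhd_iff'.mp hwNy with h | h
        · have hdw := orderOf_dvd_of_mem_zpowers h
          rw [hw_ord, hy] at hdw
          have hq2 : q ∣ p ^ r := dvd_trans (dvd_mul_left q p) hdw
          have : q ∣ p := hqp.dvd_of_dvd_pow hq2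
          exact hqne ((Nat.prime_dvd_prime_iff_eq hqp hp).mp this)
        · have hdw := orderOf_dvd_of_mem_zpowers h
          rw [hy, hw_ord] at hdw
          have hp2d : p ^ 2 ∣ p * q := dvd_trans (pow_dvd_pow p hr) hdw
          obtain ⟨t, ht⟩ := hp2d
          have hqpt : q = p * t := by
            have : p * q = p * (p * t) := by rw [ht]; ring
            exact Nat.eq_of_mul_eq_mul_left hp.pos this
          have : p ∣ q := ⟨t, hqpt⟩
          exact hqne (((Nat.prime_dvd_prime_iff_eq hp hqp).mp this).symm)
      · push_neg at hq
        obtain ⟨a, hna⟩ : ∃ a, orderOf z = p ^ a :=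
          ⟨_, Nat.eq_prime_pow_of_unique_prime_dvd hn0 (fun hd hdvd => hq _ hd hdvd)⟩
        have hNzy : closedNbhd (powerGraph G) z = closedNbhd (powerGraph G) y := by
          apply Set.Subset.antisymm
          · intro w hw
            rcases mem_closedNbhd_iff'.mp hw with h | h
            · have hwo : orderOf w ∣ p ^ a := hna ▸ orderOf_dvd_of_mem_zpowers h
              have hyo : orderOf y ∣ p ^ a := hna ▸ orderOf_dvd_of_mem_zpowers hyz
              rcases pcomp a _ _ hwo hyo with hle | hle
              · exact mem_closedNbhd_iff'.mpr (Or.inl (mem_zpowers_of_orderOf_dvd' h hyz hle))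
              · exact mem_closedNbhd_iff'.mpr (Or.inr (mem_zpowers_of_orderOf_dvd' hyz h hle))
            · exact mem_closedNbhd_iff'.mpr (Or.inr (Subgroup.zpowers_le.mpr h hyz))
          · intro w hw
            have hzw := (hmemhat z).mp hz w hw
            rcases mem_closedNbhd_iff'.mp hzw with h | h
            · exact mem_closedNbhd_iff'.mpr (Or.inr h)
            · exact mem_closedNbhd_iff'.mpr (Or.inl h)
        have hzC : z ∈ C := by rw [hC]; exact hNzy
        rw [hdesc] at hzC
        exact hzny hzC.1
    have hhat : nbhdClosure (powerGraph G) C = (Subgroup.zpowers y : Set G) :=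
      Set.Subset.antisymm hrev hsub
    refine ⟨by rw [hhat, hCU], h1C, p, r, hp, hr, ?_⟩
    rw [hhat, ← Nat.card_coe_set_eq]
    rw [SetLike.coe_sort_coe, Nat.card_zpowers, hy]
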